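/- For every z ≥ 0, the Mills ratio satisfies z/(1+z²) ≤ 2/(z+√(z²+4)) ≤ (1-Φ(z))/φ(z) ≤ 4/(3z+√(z²+8)). -/

import Mathlib

open Real MeasureTheory Set Filter Topology

noncomputable def millsψ (t : ℝ) : ℝ := (1 / Real.sqrt (2 * π)) * Real.exp (-t ^ 2 / 2)



lemma millsψ_pos (t : ℝ) : 0 < millsψ t := by
  unfold millsψ
  have h : (0:ℝ) < Real.sqrt (2 * π) := Real.sqrt_pos.2 (by positivity)
  positivity

lemma millsψ_eq : millsψ = fun t => (1 / Real.sqrt (2 * π)) * Real.exp (-(1/2) * t ^ 2) := by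
  funext t; unfold millsψ; ring_nf

lemma millsψ_integrable : Integrable millsψ := by
  rw [millsψ_eq]
  exact (integrable_exp_neg_mul_sq (by norm_num : (0:ℝ) < 1/2)).const_mul _

lemma millsψ_integral : ∫ t, millsψ t = 1 := by
  rw [millsψ_eq]
  rw [MeasureTheory.integral_const_mul]
  rw [show (fun t : ℝ => Real.exp (-(1/2) * t ^ 2)) = fun t : ℝ => Real.exp (-(1/2) * t ^ 2) from rfl]
  rw [integral_gaussian]
  have : π / (1/2 : ℝ) = 2 * π := by ring
  rw [this]
  have h : (0:ℝ) < Real.sqrt (2 * π) := Real.sqrt_pos.2 (by positivity)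
  field_simp

lemma millsψ_hasDeriv (t : ℝ) : HasDerivAt millsψ (-t * millsψ t) t := by
  have h1 : HasDerivAt (fun u : ℝ => -u ^ 2 / 2) (-t) t := by
    have := ((hasDerivAt_pow 2 t).neg.div_const 2)
    refine this.congr_deriv ?_; push_cast; ring
  have h2 := (h1.exp).const_mul (1 / Real.sqrt (2 * π))
  refine h2.congr_deriv ?_
  unfold millsψ; ring

lemma millsψ_tendsto : Tendsto millsψ atTop (𝓝 0) := by
  have hp : Tendsto (fun t : ℝ => t ^ 2 / 2) atTop atTop :=
    (tendsto_pow_atTop (by norm_num : (2:ℕ) ≠ 0)).atTop_div_const (by norm_num)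
  have h1 : Tendsto (fun t : ℝ => -t ^ 2 / 2) atTop atBot := by
    have := tendsto_neg_atTop_atBot.comp hp
    refine this.congr fun t => ?_
    simp [Function.comp, neg_div]
  have h2 : Tendsto (fun t : ℝ => Real.exp (-t ^ 2 / 2)) atTop (𝓝 0) :=
    Real.tendsto_exp_atBot.comp h1
  unfold millsψ
  simpa only [mul_zero] using h2.const_mul (1 / Real.sqrt (2 * π))

lemma sqrt_sq_add_hasDeriv (a : ℝ) (ha : 0 < a) (t : ℝ) :
    HasDerivAt (fun u : ℝ => Real.sqrt (u ^ 2 + a)) (t / Real.sqrt (t ^ 2 + a)) t := by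
  have h1 : HasDerivAt (fun u : ℝ => u ^ 2 + a) (2 * t) t := by
    simpa using (hasDerivAt_pow 2 t).add_const a
  have h2 := (Real.hasDerivAt_sqrt (show t ^ 2 + a ≠ 0 by positivity)).comp t h1
  refine h2.congr_deriv ?_
  have hs : (0:ℝ) < Real.sqrt (t ^ 2 + a) := Real.sqrt_pos.2 (by positivity)
  field_simp

lemma lt_sqrt_sq_add (a t : ℝ) (ha : 0 < a) : t < Real.sqrt (t ^ 2 + a) := by
  have h1 : t ≤ |t| := le_abs_self t
  have h2 : |t| = Real.sqrt (t ^ 2) := by rw [Real.sqrt_sq_eq_abs]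
  have h3 : Real.sqrt (t ^ 2) < Real.sqrt (t ^ 2 + a) :=
    Real.sqrt_lt_sqrt (by positivity) (by linarith)
  linarith [h1, h2 ▸ h3]


lemma millsψ_continuous : Continuous millsψ := by
  unfold millsψ; fun_prop

lemma neg_lt_sqrt_sq_add (a t : ℝ) (ha : 0 < a) : -t < Real.sqrt (t ^ 2 + a) := by
  have := lt_sqrt_sq_add a (-t) ha
  simpa [neg_pow] using this

lemma lower_hasDeriv (t : ℝ) :
    HasDerivAt (fun u : ℝ => -(2 / (u + Real.sqrt (u ^ 2 + 4)) * millsψ u))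
      (millsψ t * (t * (2 / (t + Real.sqrt (t ^ 2 + 4)))
        + 2 * (1 + t / Real.sqrt (t ^ 2 + 4)) / (t + Real.sqrt (t ^ 2 + 4)) ^ 2)) t := by
  have hs0 : (0:ℝ) < Real.sqrt (t ^ 2 + 4) := Real.sqrt_pos.2 (by positivity)
  have hden : (0:ℝ) < t + Real.sqrt (t ^ 2 + 4) := by
    have := neg_lt_sqrt_sq_add 4 t (by norm_num); linarith
  have hd : HasDerivAt (fun u : ℝ => u + Real.sqrt (u ^ 2 + 4))
      (1 + t / Real.sqrt (t ^ 2 + 4)) t :=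
    (hasDerivAt_id t).add (sqrt_sq_add_hasDeriv 4 (by norm_num) t)
  have hb : HasDerivAt (fun u : ℝ => 2 / (u + Real.sqrt (u ^ 2 + 4)))
      (-(2 * (1 + t / Real.sqrt (t ^ 2 + 4))) / (t + Real.sqrt (t ^ 2 + 4)) ^ 2) t := by
    have := (hasDerivAt_const t (2:ℝ)).div hd (ne_of_gt hden)
    refine this.congr_deriv ?_; ring
  have h := (hb.mul (millsψ_hasDeriv t)).neg
  refine h.congr_deriv ?_
  field_simp
  ring

lemma lower_pt_nonneg (t : ℝ) (ht : 0 ≤ t) :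
    0 ≤ t * (2 / (t + Real.sqrt (t ^ 2 + 4)))
        + 2 * (1 + t / Real.sqrt (t ^ 2 + 4)) / (t + Real.sqrt (t ^ 2 + 4)) ^ 2 := by
  have hs0 : (0:ℝ) < Real.sqrt (t ^ 2 + 4) := Real.sqrt_pos.2 (by positivity)
  have hden : (0:ℝ) < t + Real.sqrt (t ^ 2 + 4) := by
    have := neg_lt_sqrt_sq_add 4 t (by norm_num); linarith
  positivity

lemma lower_pt_le_one (t : ℝ) (ht : 0 ≤ t) :
    t * (2 / (t + Real.sqrt (t ^ 2 + 4)))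
        + 2 * (1 + t / Real.sqrt (t ^ 2 + 4)) / (t + Real.sqrt (t ^ 2 + 4)) ^ 2 ≤ 1 := by
  set s := Real.sqrt (t ^ 2 + 4) with hsdef
  have hs0 : (0:ℝ) < s := Real.sqrt_pos.2 (by positivity)
  have hs2 : s ^ 2 = t ^ 2 + 4 := Real.sq_sqrt (by positivity)
  have hden : (0:ℝ) < t + s := by
    have := neg_lt_sqrt_sq_add 4 t (by norm_num); linarith
  have hts : t * s ≤ t ^ 2 + 2 := by nlinarith [sq_nonneg (t - s)]
  have key : t * (2 / (t + s)) + 2 * (1 + t / s) / (t + s) ^ 2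
      = (2 * t * s * (t + s) + 2 * (s + t)) / (s * (t + s) ^ 2) := by
    field_simp
  rw [key, div_le_one (by positivity)]
  nlinarith [mul_pos hden hden, mul_le_mul_of_nonneg_left hts hden.le]

lemma mills_tail_lower (z : ℝ) (hz : 0 ≤ z) :
    2 / (z + Real.sqrt (z ^ 2 + 4)) * millsψ z ≤ ∫ t in Ioi z, millsψ t := by
  set g : ℝ → ℝ := fun t => millsψ t * (t * (2 / (t + Real.sqrt (t ^ 2 + 4)))
        + 2 * (1 + t / Real.sqrt (t ^ 2 + 4)) / (t + Real.sqrt (t ^ 2 + 4)) ^ 2) with hg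
  have hsqc : Continuous fun t : ℝ => Real.sqrt (t ^ 2 + 4) := by fun_prop
  have hs0 : ∀ t : ℝ, (0:ℝ) < Real.sqrt (t ^ 2 + 4) :=
    fun t => Real.sqrt_pos.2 (by positivity)
  have hden : ∀ t : ℝ, (0:ℝ) < t + Real.sqrt (t ^ 2 + 4) := by
    intro t; have := neg_lt_sqrt_sq_add 4 t (by norm_num); linarith
  have hgc : Continuous g := by
    apply millsψ_continuous.mul
    apply Continuous.add
    · exact continuous_id.mul (continuous_const.div (continuous_id.add hsqc)
        fun t => (hden t).ne')
    · exact Continuous.div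
        (continuous_const.mul (continuous_const.add (continuous_id.div hsqc fun t => (hs0 t).ne')))
        ((continuous_id.add hsqc).pow 2)
        fun t => pow_ne_zero _ (hden t).ne'
  have hgle : ∀ t ∈ Ioi z, g t ≤ millsψ t := by
    intro t htz
    have ht : 0 ≤ t := le_trans hz (le_of_lt htz)
    calc g t ≤ millsψ t * 1 :=
          mul_le_mul_of_nonneg_left (lower_pt_le_one t ht) (millsψ_pos t).le
      _ = millsψ t := mul_one _
  have hgnn : ∀ t ∈ Ioi z, 0 ≤ g t := fun t htz =>
    mul_nonneg (millsψ_pos t).le (lower_pt_nonneg t (le_trans hz (le_of_lt htz)))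
  have hderiv : ∀ t ∈ Ici z,
      HasDerivAt (fun u : ℝ => -(2 / (u + Real.sqrt (u ^ 2 + 4)) * millsψ u)) (g t) t :=
    fun t _ => lower_hasDeriv t
  have hint : IntegrableOn g (Ioi z) := by
    apply Integrable.mono (millsψ_integrable.integrableOn)
      (hgc.aestronglyMeasurable.restrict)
    refine (ae_restrict_iff' measurableSet_Ioi).2 (ae_of_all _ fun t htz => ?_)
    rw [Real.norm_eq_abs, Real.norm_eq_abs, abs_of_nonneg (hgnn t htz),
      abs_of_nonneg (millsψ_pos t).le]
    exact hgle t htz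
  have htend : Tendsto (fun u : ℝ => -(2 / (u + Real.sqrt (u ^ 2 + 4)) * millsψ u))
      atTop (nhds 0) := by
    rw [show (0:ℝ) = -0 by norm_num]
    apply Tendsto.neg
    apply squeeze_zero' ?_ ?_ millsψ_tendsto
    · exact Eventually.of_forall fun t =>
        mul_nonneg (div_nonneg (by norm_num) (hden t).le) (millsψ_pos t).le
    · filter_upwards [eventually_ge_atTop (0:ℝ)] with t ht
      have h2 : (2:ℝ) ≤ t + Real.sqrt (t ^ 2 + 4) := by
        have : (2:ℝ) = Real.sqrt 4 := by
          rw [show (4:ℝ) = 2 ^ 2 by norm_num, Real.sqrt_sq (by norm_num)]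
        nlinarith [Real.sqrt_le_sqrt (show (4:ℝ) ≤ t ^ 2 + 4 by nlinarith), this]
      calc 2 / (t + Real.sqrt (t ^ 2 + 4)) * millsψ t ≤ 1 * millsψ t := by
            apply mul_le_mul_of_nonneg_right _ (millsψ_pos t).le
            rw [div_le_one (hden t)]; exact h2
        _ = millsψ t := one_mul _
  have hFTC := integral_Ioi_of_hasDerivAt_of_tendsto' hderiv hint htend
  have heq : ∫ t in Ioi z, g t = 2 / (z + Real.sqrt (z ^ 2 + 4)) * millsψ z := by
    rw [hFTC]; ring
  rw [← heq]
  exact setIntegral_mono_on hint (millsψ_integrable.integrableOn) measurableSet_Ioi hgle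


lemma sqrt8_ge_two (t : ℝ) : (2:ℝ) ≤ Real.sqrt (t ^ 2 + 8) := by
  have h : Real.sqrt 4 ≤ Real.sqrt (t ^ 2 + 8) := Real.sqrt_le_sqrt (by nlinarith)
  have h4 : Real.sqrt 4 = 2 := by
    rw [show (4:ℝ) = 2 ^ 2 by norm_num, Real.sqrt_sq (by norm_num)]
  linarith

lemma upper_hasDeriv (t : ℝ) (ht : 0 ≤ t) :
    HasDerivAt (fun u : ℝ => -(4 / (3 * u + Real.sqrt (u ^ 2 + 8)) * millsψ u))
      (millsψ t * (t * (4 / (3 * t + Real.sqrt (t ^ 2 + 8)))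
        + 4 * (3 + t / Real.sqrt (t ^ 2 + 8)) / (3 * t + Real.sqrt (t ^ 2 + 8)) ^ 2)) t := by
  have hs0 : (0:ℝ) < Real.sqrt (t ^ 2 + 8) := Real.sqrt_pos.2 (by positivity)
  have hden : (0:ℝ) < 3 * t + Real.sqrt (t ^ 2 + 8) := by positivity
  have hd : HasDerivAt (fun u : ℝ => 3 * u + Real.sqrt (u ^ 2 + 8))
      (3 + t / Real.sqrt (t ^ 2 + 8)) t :=
    by exact (((hasDerivAt_id t).const_mul 3).add (sqrt_sq_add_hasDeriv 8 (by norm_num) t)).congr_deriv (by ring)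
  have hb : HasDerivAt (fun u : ℝ => 4 / (3 * u + Real.sqrt (u ^ 2 + 8)))
      (-(4 * (3 + t / Real.sqrt (t ^ 2 + 8))) / (3 * t + Real.sqrt (t ^ 2 + 8)) ^ 2) t := by
    have := (hasDerivAt_const t (4:ℝ)).div hd (ne_of_gt hden)
    refine this.congr_deriv ?_; ring
  have h := (hb.mul (millsψ_hasDeriv t)).neg
  refine h.congr_deriv ?_
  field_simp
  ring

lemma upper_pt_ge_one (t : ℝ) (ht : 0 ≤ t) :
    1 ≤ t * (4 / (3 * t + Real.sqrt (t ^ 2 + 8)))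
        + 4 * (3 + t / Real.sqrt (t ^ 2 + 8)) / (3 * t + Real.sqrt (t ^ 2 + 8)) ^ 2 := by
  set s := Real.sqrt (t ^ 2 + 8) with hsdef
  have hs0 : (0:ℝ) < s := Real.sqrt_pos.2 (by positivity)
  have hs2 : s ^ 2 = t ^ 2 + 8 := Real.sq_sqrt (by positivity)
  have hs4 : (2:ℝ) ≤ s := sqrt8_ge_two t
  have hden : (0:ℝ) < 3 * t + s := by positivity
  have hsq : s ^ 2 * (t ^ 2 + 2) ^ 2 = t ^ 2 * (t ^ 2 + 6) ^ 2 + 32 := by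
    rw [hs2]; ring
  have key : t * (t ^ 2 + 6) ≤ s * (t ^ 2 + 2) := by
    nlinarith [mul_nonneg ht (show (0:ℝ) ≤ t ^ 2 + 6 by positivity),
      mul_le_mul hs4 (show (2:ℝ) ≤ t ^ 2 + 2 by nlinarith) (by norm_num) hs0.le]
  have heq : t * (4 / (3 * t + s)) + 4 * (3 + t / s) / (3 * t + s) ^ 2
      = (4 * t * s * (3 * t + s) + 4 * (3 * s + t)) / (s * (3 * t + s) ^ 2) := by
    field_simp
  rw [heq, le_div_iff₀ (by positivity)]
  nlinarith [key, hs2, mul_pos hden hden]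

lemma upper_pt_le_four (t : ℝ) (ht : 0 ≤ t) :
    t * (4 / (3 * t + Real.sqrt (t ^ 2 + 8)))
        + 4 * (3 + t / Real.sqrt (t ^ 2 + 8)) / (3 * t + Real.sqrt (t ^ 2 + 8)) ^ 2 ≤ 4 := by
  set s := Real.sqrt (t ^ 2 + 8) with hsdef
  have hs0 : (0:ℝ) < s := Real.sqrt_pos.2 (by positivity)
  have hs2 : s ^ 2 = t ^ 2 + 8 := Real.sq_sqrt (by positivity)
  have hs4 : (2:ℝ) ≤ s := sqrt8_ge_two t
  have hden : (0:ℝ) < 3 * t + s := by positivity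
  have heq : t * (4 / (3 * t + s)) + 4 * (3 + t / s) / (3 * t + s) ^ 2
      = (4 * t * s * (3 * t + s) + 4 * (3 * s + t)) / (s * (3 * t + s) ^ 2) := by
    field_simp
  rw [heq, div_le_iff₀ (by positivity)]
  nlinarith [hs2, mul_pos hden hden, mul_nonneg (mul_nonneg ht ht) hs0.le,
    mul_nonneg ht hs0.le]

lemma mills_tail_upper (z : ℝ) (hz : 0 ≤ z) :
    (∫ t in Ioi z, millsψ t) ≤ 4 / (3 * z + Real.sqrt (z ^ 2 + 8)) * millsψ z := by
  set g : ℝ → ℝ := fun t => millsψ t * (t * (4 / (3 * t + Real.sqrt (t ^ 2 + 8)))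
        + 4 * (3 + t / Real.sqrt (t ^ 2 + 8)) / (3 * t + Real.sqrt (t ^ 2 + 8)) ^ 2) with hg
  have hsqc : Continuous fun t : ℝ => Real.sqrt (t ^ 2 + 8) := by fun_prop
  have hs0 : ∀ t : ℝ, (0:ℝ) < Real.sqrt (t ^ 2 + 8) :=
    fun t => Real.sqrt_pos.2 (by positivity)
  have hden : ∀ t : ℝ, 0 ≤ t → (0:ℝ) < 3 * t + Real.sqrt (t ^ 2 + 8) := by
    intro t ht; have := hs0 t; positivity
  have hzden := hden z hz
  have hgc : ContinuousOn g (Ioi z) := by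
    apply ContinuousOn.mul millsψ_continuous.continuousOn
    apply ContinuousOn.add
    · exact (continuousOn_id.mul ((continuousOn_const.div
        ((continuous_const.mul continuous_id).add hsqc).continuousOn)
        fun t htz => (hden t (le_trans hz (le_of_lt htz))).ne'))
    · exact ContinuousOn.div
        (continuousOn_const.mul (continuousOn_const.add
          (continuousOn_id.div hsqc.continuousOn fun t _ => (hs0 t).ne')))
        ((((continuous_const.mul continuous_id).add hsqc).pow 2).continuousOn)
        fun t htz => pow_ne_zero _ (hden t (le_trans hz (le_of_lt htz))).ne'
  have hgge : ∀ t ∈ Ioi z, millsψ t ≤ g t := by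
    intro t htz
    have ht : 0 ≤ t := le_trans hz (le_of_lt htz)
    calc millsψ t = millsψ t * 1 := (mul_one _).symm
      _ ≤ g t := mul_le_mul_of_nonneg_left (upper_pt_ge_one t ht) (millsψ_pos t).le
  have hgle4 : ∀ t ∈ Ioi z, g t ≤ 4 * millsψ t := by
    intro t htz
    have ht : 0 ≤ t := le_trans hz (le_of_lt htz)
    calc g t ≤ millsψ t * 4 :=
          mul_le_mul_of_nonneg_left (upper_pt_le_four t ht) (millsψ_pos t).le
      _ = 4 * millsψ t := by ring
  have hderiv : ∀ t ∈ Ici z,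
      HasDerivAt (fun u : ℝ => -(4 / (3 * u + Real.sqrt (u ^ 2 + 8)) * millsψ u)) (g t) t :=
    fun t htz => upper_hasDeriv t (le_trans hz htz)
  have hint : IntegrableOn g (Ioi z) := by
    apply Integrable.mono ((millsψ_integrable.const_mul 4).integrableOn)
      (hgc.aestronglyMeasurable measurableSet_Ioi)
    refine (ae_restrict_iff' measurableSet_Ioi).2 (ae_of_all _ fun t htz => ?_)
    have ht : 0 ≤ t := le_trans hz (le_of_lt htz)
    rw [Real.norm_eq_abs, Real.norm_eq_abs,
      abs_of_nonneg (le_trans (millsψ_pos t).le (hgge t htz)),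
      abs_of_nonneg (by linarith [millsψ_pos t] : (0:ℝ) ≤ 4 * millsψ t)]
    exact hgle4 t htz
  have htend : Tendsto (fun u : ℝ => -(4 / (3 * u + Real.sqrt (u ^ 2 + 8)) * millsψ u))
      atTop (nhds 0) := by
    rw [show (0:ℝ) = -0 by norm_num]
    apply Tendsto.neg
    have h2 : Tendsto (fun t : ℝ => 2 * millsψ t) atTop (nhds 0) := by
      have := millsψ_tendsto.const_mul (2:ℝ)
      simpa using this
    apply squeeze_zero' ?_ ?_ h2
    · filter_upwards [eventually_ge_atTop (0:ℝ)] with t ht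
      exact mul_nonneg (div_nonneg (by norm_num) (hden t ht).le) (millsψ_pos t).le
    · filter_upwards [eventually_ge_atTop (0:ℝ)] with t ht
      have hc2 : 4 / (3 * t + Real.sqrt (t ^ 2 + 8)) ≤ 2 := by
        rw [div_le_iff₀ (hden t ht)]
        nlinarith [sqrt8_ge_two t]
      exact mul_le_mul_of_nonneg_right hc2 (millsψ_pos t).le
  have hFTC := integral_Ioi_of_hasDerivAt_of_tendsto' hderiv hint htend
  have heq : ∫ t in Ioi z, g t = 4 / (3 * z + Real.sqrt (z ^ 2 + 8)) * millsψ z := by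
    rw [hFTC]; ring
  rw [← heq]
  exact setIntegral_mono_on (millsψ_integrable.integrableOn) hint measurableSet_Ioi hgge

lemma millsψ_tail_eq (z : ℝ) :
    ∫ t in Ioi z, millsψ t = 1 - ∫ s in Iic z, millsψ s := by
  have h := intervalIntegral.integral_Iic_add_Ioi (μ := volume) (b := z)
    millsψ_integrable.integrableOn millsψ_integrable.integrableOn
  rw [millsψ_integral] at h
  linarith

/-- Mills' ratio inequalities: for `z ≥ 0`,
`z/(1+z²) ≤ 2/(z+√(z²+4)) ≤ (1-Φ(z))/φ(z) ≤ 4/(3z+√(z²+8))`. -/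
theorem mills_ratio_bounds (z : ℝ) (hz : 0 ≤ z)
    (φ : ℝ → ℝ) (hφ : ∀ t, φ t = (1 / Real.sqrt (2 * π)) * Real.exp (-t ^ 2 / 2))
    (Φ : ℝ → ℝ) (hΦ : ∀ t, Φ t = ∫ s in Set.Iic t, φ s) :
    z / (1 + z ^ 2) ≤ 2 / (z + Real.sqrt (z ^ 2 + 4))
    ∧ 2 / (z + Real.sqrt (z ^ 2 + 4)) ≤ (1 - Φ z) / φ z
    ∧ (1 - Φ z) / φ z ≤ 4 / (3 * z + Real.sqrt (z ^ 2 + 8)) := by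
  have hφψ : φ = millsψ := funext fun t => (hφ t).trans rfl
  subst hφψ
  have hP : (0:ℝ) < millsψ z := millsψ_pos z
  have hT : 1 - Φ z = ∫ t in Ioi z, millsψ t := by
    rw [hΦ z]; rw [millsψ_tail_eq z]
  refine ⟨?_, ?_, ?_⟩
  · have hs0 : (0:ℝ) < Real.sqrt (z ^ 2 + 4) := Real.sqrt_pos.2 (by positivity)
    have hs2 : Real.sqrt (z ^ 2 + 4) ^ 2 = z ^ 2 + 4 := Real.sq_sqrt (by positivity)
    have hden : (0:ℝ) < z + Real.sqrt (z ^ 2 + 4) := by positivity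
    rw [div_le_div_iff₀ (by positivity) hden]
    nlinarith [sq_nonneg (z - Real.sqrt (z ^ 2 + 4))]
  · rw [hT, le_div_iff₀ hP]
    exact mills_tail_lower z hz
  · rw [hT, div_le_iff₀ hP]
    exact mills_tail_upper z hz
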